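/- For every t ∈ (0, π), cot t = 1/t + 2t Σ_{k=1}^∞ 1/(t² − π²k²), where the series converges absolutely. -/

import Mathlib

open Real Filter Topology

private lemma cot_aux (a : ℝ) (ha0 : 0 < a) (ha1 : a < 1) :
    ∃ D : ℝ, HasSum (fun j : ℕ => 2 * a / (a ^ 2 - ((j : ℝ) + 1) ^ 2)) D ∧
      π * a * Real.cos (π * a) = Real.sin (π * a) + a * Real.sin (π * a) * D := by
  have hπ := Real.pi_pos
  set ρ : ℝ := (a + 1) / 2 with hρ_def
  have haρ : a < ρ := by rw [hρ_def]; linarith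
  have hρ0 : 0 < ρ := by rw [hρ_def]; linarith
  have hρ1 : ρ < 1 := by rw [hρ_def]; linarith
  have hρ2 : ρ ^ 2 < 1 := by nlinarith
  set U : Set ℂ := Metric.ball (0 : ℂ) ρ with hU_def
  have hUopen : IsOpen U := Metric.isOpen_ball
  have haU : (a : ℂ) ∈ U := by
    simp only [hU_def, Metric.mem_ball, Complex.dist_eq, sub_zero, Complex.norm_real, Real.norm_eq_abs]
    rwa [abs_of_pos ha0]
  set F : ℕ → ℂ → ℂ := fun j z => Complex.log (1 - z ^ 2 / ((j : ℂ) + 1) ^ 2) with hF_def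
  have hjnorm : ∀ j : ℕ, ‖((j : ℂ) + 1)‖ = (j : ℝ) + 1 := by
    intro j
    rw [show ((j : ℂ) + 1) = ((j + 1 : ℕ) : ℂ) by push_cast; ring, Complex.norm_natCast]
    push_cast; ring
  have hj1 : ∀ j : ℕ, (1 : ℝ) ≤ ((j : ℝ) + 1) ^ 2 := by
    intro j
    nlinarith [Nat.cast_nonneg (α := ℝ) j]
  have hw : ∀ (j : ℕ), ∀ z ∈ U, ‖z ^ 2 / ((j : ℂ) + 1) ^ 2‖ ≤ ρ ^ 2 / ((j : ℝ) + 1) ^ 2 := by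
    intro j z hz
    rw [norm_div, norm_pow, norm_pow, hjnorm]
    have hzρ : ‖z‖ < ρ := by
      simpa [hU_def, Complex.dist_eq] using hz
    gcongr
  have hw1 : ∀ (j : ℕ), ∀ z ∈ U, ‖z ^ 2 / ((j : ℂ) + 1) ^ 2‖ ≤ ρ ^ 2 := by
    intro j z hz
    refine (hw j z hz).trans ?_
    rw [div_le_iff₀ (by nlinarith [hj1 j] : (0:ℝ) < ((j : ℝ) + 1) ^ 2)]
    nlinarith [hj1 j, sq_nonneg ρ]
  have hslit : ∀ (j : ℕ), ∀ z ∈ U, (1 - z ^ 2 / ((j : ℂ) + 1) ^ 2) ∈ Complex.slitPlane := by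
    intro j z hz
    rw [sub_eq_add_neg]
    apply Complex.mem_slitPlane_of_norm_lt_one
    rw [norm_neg]
    exact lt_of_le_of_lt (hw1 j z hz) hρ2
  set C : ℝ := ρ ^ 2 * ((1 - ρ ^ 2)⁻¹ / 2 + 1) with hC_def
  have hFle : ∀ (j : ℕ), ∀ z ∈ U, ‖F j z‖ ≤ C / ((j : ℝ) + 1) ^ 2 := by
    intro j z hz
    have h1 : ‖-(z ^ 2 / ((j : ℂ) + 1) ^ 2)‖ < 1 := by
      rw [norm_neg]; exact lt_of_le_of_lt (hw1 j z hz) hρ2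
    have hb := Complex.norm_log_one_add_le h1
    rw [show (1 : ℂ) + -(z ^ 2 / ((j : ℂ) + 1) ^ 2) = 1 - z ^ 2 / ((j : ℂ) + 1) ^ 2 by ring] at hb
    refine hb.trans ?_
    rw [norm_neg]
    set w := ‖z ^ 2 / ((j : ℂ) + 1) ^ 2‖ with hw_def
    have hw0 : 0 ≤ w := norm_nonneg _
    have hwρ : w ≤ ρ ^ 2 := hw1 j z hz
    have hwj : w ≤ ρ ^ 2 / ((j : ℝ) + 1) ^ 2 := hw j z hz
    have hρ2' : (0:ℝ) < 1 - ρ ^ 2 := by linarith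
    have hwlt : w < 1 := lt_of_le_of_lt hwρ hρ2
    have hinv : (1 - w)⁻¹ ≤ (1 - ρ ^ 2)⁻¹ := by
      apply inv_anti₀ (by linarith)
      linarith
    have hinv0 : 0 ≤ (1 - ρ ^ 2)⁻¹ := le_of_lt (by positivity)
    have h2 : w ^ 2 * (1 - w)⁻¹ ≤ (w * 1) * (1 - ρ ^ 2)⁻¹ := by
      apply mul_le_mul (by nlinarith) hinv (inv_nonneg.mpr (by linarith)) (by nlinarith)
    have h3 : w * ((1 - ρ ^ 2)⁻¹ / 2 + 1) ≤ (ρ ^ 2 / ((j : ℝ) + 1) ^ 2) * ((1 - ρ ^ 2)⁻¹ / 2 + 1) := by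
      apply mul_le_mul_of_nonneg_right hwj
      linarith
    calc w ^ 2 * (1 - w)⁻¹ / 2 + w
        ≤ w * ((1 - ρ ^ 2)⁻¹ / 2 + 1) := by nlinarith
      _ ≤ (ρ ^ 2 / ((j : ℝ) + 1) ^ 2) * ((1 - ρ ^ 2)⁻¹ / 2 + 1) := h3
      _ = C / ((j : ℝ) + 1) ^ 2 := by rw [hC_def]; ring
  -- summability of the bounding sequence
  set u : ℕ → ℝ := fun j => C / ((j : ℝ) + 1) ^ 2 with hu_def
  have hu : Summable u := by
    have h0 : Summable (fun n : ℕ => 1 / (n : ℝ) ^ 2) := by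
      rw [Real.summable_one_div_nat_pow]
      norm_num
    have h1 : Summable (fun n : ℕ => 1 / ((n : ℝ) + 1) ^ 2) := by
      have := (summable_nat_add_iff 1).mpr h0
      apply this.congr
      intro n
      push_cast
      ring
    apply (h1.mul_left C).congr
    intro n
    rw [hu_def]
    ring
  -- derivatives of the log terms
  have hd : ∀ (j : ℕ), ∀ z ∈ U, HasDerivAt (F j)
      ((-(2 * z) / ((j : ℂ) + 1) ^ 2) / (1 - z ^ 2 / ((j : ℂ) + 1) ^ 2)) z := by
    intro j z hz
    have h1 : HasDerivAt (fun z : ℂ => 1 - z ^ 2 / ((j : ℂ) + 1) ^ 2)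
        (-(2 * z) / ((j : ℂ) + 1) ^ 2) z := by
      have := ((hasDerivAt_pow 2 z).div_const (((j : ℂ) + 1) ^ 2)).const_sub 1
      refine this.congr_deriv ?_
      push_cast
      ring
    exact h1.clog (hslit j z hz)
  have hdiff : ∀ j : ℕ, DifferentiableOn ℂ (F j) U := fun j z hz =>
    ((hd j z hz).differentiableAt).differentiableWithinAt
  set h : ℂ → ℂ := fun z => ∑' j : ℕ, F j z with hh_def
  have hs : HasSum (fun j : ℕ => deriv (F j) ↑a) (deriv h ↑a) :=
    Complex.hasSum_deriv_of_summable_norm hu hdiff hUopen hFle haU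
  have hFsummable : ∀ z ∈ U, Summable fun j : ℕ => F j z := fun z hz =>
    Summable.of_norm_bounded hu (fun j => hFle j z hz)
  -- the pointwise product identity
  have hident : ∀ z ∈ U, Complex.sin (π * z) = π * z * Complex.exp (h z) := by
    intro z hz
    have h1 : Tendsto (fun n : ℕ => ∑ j ∈ Finset.range n, F j z) atTop (𝓝 (h z)) :=
      (hFsummable z hz).hasSum.tendsto_sum_nat
    have h2 : Tendsto (fun n : ℕ => Complex.exp (∑ j ∈ Finset.range n, F j z)) atTop
        (𝓝 (Complex.exp (h z))) := (Complex.continuous_exp.tendsto _).comp h1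
    have h3 : ∀ n : ℕ, Complex.exp (∑ j ∈ Finset.range n, F j z)
        = ∏ j ∈ Finset.range n, (1 - z ^ 2 / ((j : ℂ) + 1) ^ 2) := by
      intro n
      rw [Complex.exp_sum]
      exact Finset.prod_congr rfl fun j _ =>
        Complex.exp_log (Complex.slitPlane_ne_zero (hslit j z hz))
    have h2' := h2.congr h3
    have h4 : Tendsto
        (fun n : ℕ => ↑π * z * ∏ j ∈ Finset.range n, ((1 : ℂ) - z ^ 2 / ((j : ℂ) + 1) ^ 2))
        atTop (𝓝 (↑π * z * Complex.exp (h z))) := h2'.const_mul _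
    exact tendsto_nhds_unique (Complex.tendsto_euler_sin_prod z) h4
  have hhdiff : DifferentiableOn ℂ h U :=
    Complex.differentiableOn_tsum_of_summable_norm hu hdiff hUopen hFle
  set D : ℂ := deriv h ↑a with hD_def
  have hhder : HasDerivAt h D ↑a :=
    (hhdiff.differentiableAt (hUopen.mem_nhds haU)).hasDerivAt
  set E : ℂ := Complex.exp (h ↑a) with hE_def
  have hR : HasDerivAt (fun z : ℂ => (π : ℂ) * z * Complex.exp (h z))
      ((π : ℂ) * E + (π : ℂ) * ↑a * (E * D)) ↑a := by
    have h1 : HasDerivAt (fun z : ℂ => (π : ℂ) * z) (π : ℂ) ↑a := by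
      simpa using (hasDerivAt_id ((a : ℝ) : ℂ)).const_mul (π : ℂ)
    have h2 : HasDerivAt (fun z : ℂ => Complex.exp (h z)) (E * D) ↑a := by
      simpa [hE_def, mul_comm] using hhder.cexp
    exact h1.mul h2
  have hL : HasDerivAt (fun z : ℂ => Complex.sin ((π : ℂ) * z))
      ((π : ℂ) * Complex.cos ((π : ℂ) * ↑a)) ↑a := by
    have h1 : HasDerivAt (fun z : ℂ => (π : ℂ) * z) (π : ℂ) ↑a := by
      simpa using (hasDerivAt_id ((a : ℝ) : ℂ)).const_mul (π : ℂ)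
    simpa [mul_comm, Function.comp_def] using (Complex.hasDerivAt_sin ((π : ℂ) * ↑a)).comp (↑a : ℂ) h1
  have heqev : (fun z : ℂ => Complex.sin ((π : ℂ) * z))
      =ᶠ[nhds (↑a : ℂ)] (fun z => (π : ℂ) * z * Complex.exp (h z)) :=
    Filter.eventuallyEq_of_mem (hUopen.mem_nhds haU) (fun z hz => hident z hz)
  have hkey : (π : ℂ) * Complex.cos ((π : ℂ) * ↑a)
      = (π : ℂ) * E + (π : ℂ) * ↑a * (E * D) :=
    hL.unique (hR.congr_of_eventuallyEq heqev)
  have hsina : Complex.sin ((π : ℂ) * ↑a) = (π : ℂ) * ↑a * E := hident ↑a haU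
  -- identify the sum with real terms
  set r : ℕ → ℝ := fun j => 2 * a / (a ^ 2 - ((j : ℝ) + 1) ^ 2) with hr_def
  have hda : ∀ j : ℕ, deriv (F j) ↑a = ((r j : ℝ) : ℂ) := by
    intro j
    rw [(hd j ↑a haU).deriv]
    have h1 : ((j : ℂ) + 1) ^ 2 ≠ 0 := by
      intro hcon
      have : ((j : ℂ) + 1) ≠ 0 := by
        exact_mod_cast Nat.cast_add_one_ne_zero (R := ℂ) j
      exact this (pow_eq_zero_iff (n := 2) (by norm_num) |>.mp hcon)
    have h2 : (1 : ℂ) - (↑a : ℂ) ^ 2 / ((j : ℂ) + 1) ^ 2 ≠ 0 :=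
      Complex.slitPlane_ne_zero (hslit j ↑a haU)
    have h3 : ((a : ℝ) ^ 2 : ℝ) - ((j : ℝ) + 1) ^ 2 ≠ 0 := by
      have : (a : ℝ) ^ 2 < ((j : ℝ) + 1) ^ 2 := by nlinarith [hj1 j, Nat.cast_nonneg (α := ℝ) j]
      linarith
    have h3' : ((a : ℂ)) ^ 2 - ((j : ℂ) + 1) ^ 2 ≠ 0 := by
      have h4 := Complex.ofReal_ne_zero.mpr h3
      push_cast at h4
      exact h4
    have h5 : ((j : ℂ) + 1) ^ 2 - (a : ℂ) ^ 2 ≠ 0 :=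
      sub_ne_zero.mpr (sub_ne_zero.mp h3').symm
    simp only [hr_def]
    push_cast
    rw [div_div]
    have hc : ((j : ℂ) + 1) ^ 2 * (1 - (a : ℂ) ^ 2 / ((j : ℂ) + 1) ^ 2)
        = ((j : ℂ) + 1) ^ 2 - (a : ℂ) ^ 2 := by
      rw [mul_sub, mul_one, mul_div_cancel₀ _ h1]
    rw [hc, div_eq_div_iff h5 h3']
    ring
  have hs' : HasSum (fun j : ℕ => ((r j : ℝ) : ℂ)) D := by
    have : (fun j : ℕ => deriv (F j) ↑a) = fun j => ((r j : ℝ) : ℂ) := funext hda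
    rwa [this] at hs
  rw [Complex.hasSum_iff] at hs'
  obtain ⟨hre, him⟩ := hs'
  have hre' : HasSum r D.re := by simpa using hre
  have himz : D.im = 0 := by
    have h0 : HasSum (fun _ : ℕ => (0 : ℝ)) D.im := by simpa using him
    simpa using h0.unique hasSum_zero
  have hDre : D = ((D.re : ℝ) : ℂ) := by
    rw [← Complex.re_add_im D, himz]
    simp
  refine ⟨D.re, hre', ?_⟩
  have hAcos : Complex.cos ((π : ℂ) * ↑a) = ((Real.cos (π * a) : ℝ) : ℂ) := by
    rw [show (π : ℂ) * ↑a = ((π * a : ℝ) : ℂ) by push_cast; ring, Complex.ofReal_cos]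
  have hAsin : Complex.sin ((π : ℂ) * ↑a) = ((Real.sin (π * a) : ℝ) : ℂ) := by
    rw [show (π : ℂ) * ↑a = ((π * a : ℝ) : ℂ) by push_cast; ring, Complex.ofReal_sin]
  have hfinal : ((π * a * Real.cos (π * a) : ℝ) : ℂ)
      = ((Real.sin (π * a) + a * Real.sin (π * a) * D.re : ℝ) : ℂ) := by
    push_cast
    calc (π : ℂ) * ↑a * Complex.cos ((π : ℂ) * ↑a)
        = ↑a * ((π : ℂ) * Complex.cos ((π : ℂ) * ↑a)) := by ring
      _ = ↑a * ((π : ℂ) * E + (π : ℂ) * ↑a * (E * D)) := by rw [hkey]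
      _ = (π : ℂ) * ↑a * E + ↑a * ((π : ℂ) * ↑a * E) * D := by ring
      _ = Complex.sin ((π : ℂ) * ↑a) + ↑a * Complex.sin ((π : ℂ) * ↑a) * D := by
          rw [← hsina]
      _ = Complex.sin ((π : ℂ) * ↑a) + ↑a * Complex.sin ((π : ℂ) * ↑a) * ((D.re : ℝ) : ℂ) := by
          rw [← hDre]
  exact_mod_cast hfinal

theorem cot_mittag_leffler (t : ℝ) (ht : t ∈ Set.Ioo 0 π) :
    (Summable fun k : ℕ => |1 / (t ^ 2 - π ^ 2 * ((k : ℝ) + 1) ^ 2)|) ∧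
    Real.cot t = 1 / t + 2 * t * ∑' k : ℕ, 1 / (t ^ 2 - π ^ 2 * ((k : ℝ) + 1) ^ 2) := by
  obtain ⟨ht0, htπ⟩ := ht
  have hπ := Real.pi_pos
  have ha0 : 0 < t / π := div_pos ht0 hπ
  have ha1 : t / π < 1 := (div_lt_one hπ).mpr htπ
  obtain ⟨D, hD, heq⟩ := cot_aux (t / π) ha0 ha1
  have hta : π * (t / π) = t := by field_simp
  rw [hta] at heq
  have hsin : Real.sin t ≠ 0 := ne_of_gt (Real.sin_pos_of_pos_of_lt_pi ht0 htπ)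
  have htne : t ≠ 0 := ne_of_gt ht0
  have hπne : π ≠ 0 := ne_of_gt hπ
  have hden : ∀ j : ℕ, t ^ 2 - π ^ 2 * ((j : ℝ) + 1) ^ 2 ≠ 0 := by
    intro j
    have h1 : (1 : ℝ) ≤ ((j : ℝ) + 1) ^ 2 := by nlinarith [Nat.cast_nonneg (α := ℝ) j]
    have h2 : t ^ 2 - π ^ 2 * ((j : ℝ) + 1) ^ 2 < 0 := by nlinarith
    exact ne_of_lt h2
  have hterm : ∀ j : ℕ, 2 * (t / π) / ((t / π) ^ 2 - ((j : ℝ) + 1) ^ 2)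
      = (2 * t * π) * (1 / (t ^ 2 - π ^ 2 * ((j : ℝ) + 1) ^ 2)) := by
    intro j
    have hB : (t / π) ^ 2 - ((j : ℝ) + 1) ^ 2 ≠ 0 := by
      have hBe : (t / π) ^ 2 - ((j : ℝ) + 1) ^ 2
          = (t ^ 2 - π ^ 2 * ((j : ℝ) + 1) ^ 2) / π ^ 2 := by
        field_simp
      rw [hBe]
      exact div_ne_zero (hden j) (by positivity)
    rw [mul_one_div, div_eq_div_iff hB (hden j)]
    field_simp
  have hD2 : HasSum (fun j : ℕ => (2 * t * π) * (1 / (t ^ 2 - π ^ 2 * ((j : ℝ) + 1) ^ 2))) D := by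
    have := funext hterm
    rwa [this] at hD
  have h2tπ : (2 * t * π) ≠ 0 := by positivity
  have hs3 : HasSum (fun j : ℕ => 1 / (t ^ 2 - π ^ 2 * ((j : ℝ) + 1) ^ 2)) (D / (2 * t * π)) := by
    have h4 := hD2.div_const (2 * t * π)
    simpa [mul_div_cancel_left₀ _ h2tπ] using h4
  refine ⟨hs3.summable.abs, ?_⟩
  rw [Real.cot_eq_cos_div_sin, hs3.tsum_eq]
  have hstep : 2 * t * (D / (2 * t * π)) = D / π := by
    field_simp
  rw [hstep]
  field_simp at heq ⊢
  linear_combination heq
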